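/- If ζ > 0 is a Liouville number, a, b are coprime integers with b ≥ 2, ζ^{a/b} is also a Liouville number, and η > 0 is arbitrary, then the inequality |q^b ζ^a − p^b| ≤ q^{−η} has a solution in coprime positive integers p, q. -/

import Mathlib

lemma aux_pow_sub_pow_abs_le (m : ℕ) (x y M : ℝ) (hx : 0 ≤ x) (hy : 0 ≤ y)
    (hxM : x ≤ M) (hyM : y ≤ M) :
    |x ^ m - y ^ m| ≤ m * M ^ (m - 1) * |x - y| := by
  have hM : 0 ≤ M := hx.trans hxM
  rw [← geom_sum₂_mul, abs_mul]
  have hsum : |∑ i ∈ Finset.range m, x ^ i * y ^ (m - 1 - i)| ≤ m * M ^ (m - 1) := by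
    calc |∑ i ∈ Finset.range m, x ^ i * y ^ (m - 1 - i)|
        ≤ ∑ i ∈ Finset.range m, |x ^ i * y ^ (m - 1 - i)| :=
          Finset.abs_sum_le_sum_abs _ _
      _ ≤ ∑ i ∈ Finset.range m, M ^ (m - 1) := by
          apply Finset.sum_le_sum
          intro i hi
          rw [abs_mul, abs_pow, abs_pow, abs_of_nonneg hx, abs_of_nonneg hy]
          calc x ^ i * y ^ (m - 1 - i) ≤ M ^ i * M ^ (m - 1 - i) := by
                exact mul_le_mul (pow_le_pow_left₀ hx hxM i)
                  (pow_le_pow_left₀ hy hyM _) (pow_nonneg hy _) (pow_nonneg hM _)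
            _ = M ^ (m - 1) := by
                rw [← pow_add]
                congr 1
                simp at hi
                omega
      _ = m * M ^ (m - 1) := by
          rw [Finset.sum_const, Finset.card_range, nsmul_eq_mul]
  exact mul_le_mul_of_nonneg_right hsum (abs_nonneg _)

theorem liouville_root_gives_power_approximations
    (ζ : ℝ) (hζpos : 0 < ζ) (hζ : Liouville ζ)
    (a b : ℤ) (hab : IsCoprime a b) (hb : 2 ≤ b)
    (hroot : Liouville (ζ ^ ((a : ℝ) / (b : ℝ))))
    (η : ℝ) (hη : 0 < η) :
    ∃ p q : ℕ, 0 < p ∧ 0 < q ∧ Nat.Coprime p q ∧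
      |(q : ℝ) ^ b * ζ ^ a - (p : ℝ) ^ b| ≤ (q : ℝ) ^ (-η) := by
  set ξ : ℝ := ζ ^ ((a : ℝ) / (b : ℝ)) with hξdef
  have hξpos : 0 < ξ := Real.rpow_pos_of_pos hζpos _
  set m : ℕ := b.toNat with hm
  have hbm : (m : ℤ) = b := Int.toNat_of_nonneg (by linarith)
  have hm2 : 2 ≤ m := by omega
  have hbR : ((m : ℝ)) = (b : ℝ) := by exact_mod_cast hbm
  have hbne : (b : ℝ) ≠ 0 := by
    have : (0:ℝ) < (b:ℝ) := by exact_mod_cast (by linarith : (0:ℤ) < b)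
    linarith
  -- ξ ^ m = ζ ^ a
  have hξb : ξ ^ m = ζ ^ a := by
    rw [hξdef, ← Real.rpow_natCast (ζ ^ ((a : ℝ) / (b : ℝ))) m,
      ← Real.rpow_mul hζpos.le, hbR, div_mul_cancel₀ _ hbne, Real.rpow_intCast]
  -- choose K
  obtain ⟨K1, hK1⟩ := pow_unbounded_of_one_lt (m * (ξ + 1) ^ (m - 1)) (by norm_num : (1:ℝ) < 2)
  obtain ⟨K2, hK2⟩ := pow_unbounded_of_one_lt (1 / ξ) (by norm_num : (1:ℝ) < 2)
  set K : ℕ := max K1 K2 with hK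
  have hK1' : m * (ξ + 1) ^ (m - 1) ≤ 2 ^ K :=
    hK1.le.trans (pow_le_pow_right₀ (by norm_num) (le_max_left _ _))
  have hK2' : 1 / ξ < 2 ^ K :=
    hK2.trans_le (pow_le_pow_right₀ (by norm_num) (le_max_right _ _))
  set n : ℕ := m + ⌈η⌉₊ + K with hn
  obtain ⟨p₀, q₀, hq₀, hne, happrox⟩ := hroot n
  have hq₀R : (1:ℝ) < (q₀ : ℝ) := by exact_mod_cast hq₀
  have hq₀pos : (0:ℝ) < (q₀ : ℝ) := by linarith
  have hq₀two : (2:ℝ) ≤ (q₀ : ℝ) := by exact_mod_cast hq₀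
  -- 1 / q₀ ^ n < ξ
  have h2n : (2:ℝ) ^ K ≤ (q₀ : ℝ) ^ n := by
    calc (2:ℝ) ^ K ≤ (2:ℝ) ^ n := pow_le_pow_right₀ (by norm_num) (by omega)
      _ ≤ (q₀ : ℝ) ^ n := pow_le_pow_left₀ (by norm_num) hq₀two n
  have hεξ : 1 / (q₀ : ℝ) ^ n < ξ := by
    rw [div_lt_iff₀ (by positivity)]
    calc (1:ℝ) = ξ * (1 / ξ) := by field_simp
      _ < ξ * (2 ^ K) := by
          exact mul_lt_mul_of_pos_left hK2' hξpos
      _ ≤ ξ * (q₀ : ℝ) ^ n := by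
          exact mul_le_mul_of_nonneg_left h2n hξpos.le
  -- p₀ is positive
  have hfrac_pos : 0 < (p₀ : ℝ) / (q₀ : ℝ) := by
    have h1 : ξ - (p₀:ℝ)/(q₀:ℝ) < 1 / (q₀:ℝ) ^ n := (abs_lt.mp happrox).2 |>.trans_le le_rfl
      |>.trans_le le_rfl
    have := (abs_lt.mp happrox).2
    linarith [this]
  have hp₀pos : 0 < p₀ := by
    by_contra h
    push_neg at h
    have : (p₀:ℝ) ≤ 0 := by exact_mod_cast h
    have : (p₀:ℝ)/(q₀:ℝ) ≤ 0 := div_nonpos_of_nonpos_of_nonneg this hq₀pos.le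
    linarith
  -- pass to naturals
  set P : ℕ := p₀.toNat with hPdef
  set Q : ℕ := q₀.toNat with hQdef
  have hPZ : ((P : ℤ)) = p₀ := Int.toNat_of_nonneg hp₀pos.le
  have hQZ : ((Q : ℤ)) = q₀ := Int.toNat_of_nonneg (by linarith [hq₀] : (0:ℤ) ≤ q₀)
  have hPR : ((P : ℝ)) = (p₀ : ℝ) := by exact_mod_cast hPZ
  have hQR : ((Q : ℝ)) = (q₀ : ℝ) := by exact_mod_cast hQZ
  have hPpos : 0 < P := by
    rw [hPdef]; omega
  have hQ2 : 2 ≤ Q := by omega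
  set g : ℕ := Nat.gcd P Q with hg
  have hgpos : 0 < g := Nat.gcd_pos_of_pos_left _ hPpos
  set p : ℕ := P / g with hp
  set q : ℕ := Q / g with hq
  have hppos : 0 < p := Nat.div_pos (Nat.le_of_dvd hPpos (Nat.gcd_dvd_left _ _)) hgpos
  have hqpos : 0 < q := Nat.div_pos (Nat.le_of_dvd (by omega) (Nat.gcd_dvd_right _ _)) hgpos
  have hcop : Nat.Coprime p q := Nat.coprime_div_gcd_div_gcd hgpos
  have hPpg : p * g = P := Nat.div_mul_cancel (Nat.gcd_dvd_left _ _)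
  have hQqg : q * g = Q := Nat.div_mul_cancel (Nat.gcd_dvd_right _ _)
  have hqQ : q ≤ Q := Nat.div_le_self _ _
  have hqR : (0:ℝ) < (q:ℝ) := by exact_mod_cast hqpos
  have hqQR : (q:ℝ) ≤ (Q:ℝ) := by exact_mod_cast hqQ
  have hgR : (0:ℝ) < (g:ℝ) := by exact_mod_cast hgpos
  have hfrac : (p:ℝ) / (q:ℝ) = (P:ℝ) / (Q:ℝ) := by
    rw [← hPpg, ← hQqg]
    push_cast
    rw [mul_div_mul_right _ _ (ne_of_gt hgR)]
  refine ⟨p, q, hppos, hqpos, hcop, ?_⟩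
  -- rewrite the goal with natural powers
  have hzq : (q:ℝ) ^ b = (q:ℝ) ^ m := by rw [← hbm, zpow_natCast]
  have hzp : (p:ℝ) ^ b = (p:ℝ) ^ m := by rw [← hbm, zpow_natCast]
  rw [hzq, hzp, ← hξb, ← mul_pow]
  -- approximation in terms of p, q
  have happ' : |ξ - (p:ℝ)/(q:ℝ)| < 1 / (Q:ℝ) ^ n := by
    rw [hfrac, hPR, hQR]; exact happrox
  -- bound |qξ - p|
  have hdist : |(q:ℝ) * ξ - (p:ℝ)| < (q:ℝ) / (Q:ℝ) ^ n := by
    have : |(q:ℝ) * ξ - (p:ℝ)| = (q:ℝ) * |ξ - (p:ℝ)/(q:ℝ)| := by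
      rw [← abs_of_pos hqR, ← abs_mul]
      congr 1
      field_simp
      rw [abs_of_pos hqR]; ring
    rw [this]
    exact lt_of_lt_of_eq (mul_lt_mul_of_pos_left happ' hqR) (mul_one_div _ _)
  -- p ≤ q (ξ + 1)
  have hQn1 : 1 / (Q:ℝ) ^ n ≤ 1 := by
    rw [div_le_one (by positivity)]
    exact one_le_pow₀ (by exact_mod_cast (by omega : 1 ≤ Q))
  have hpbound : (p:ℝ) ≤ (q:ℝ) * (ξ + 1) := by
    have h2 := (abs_lt.mp happ').1
    have : (p:ℝ)/(q:ℝ) ≤ ξ + 1 := by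
      nlinarith [hQn1]
    calc (p:ℝ) = (q:ℝ) * ((p:ℝ)/(q:ℝ)) := by field_simp
      _ ≤ (q:ℝ) * (ξ + 1) := mul_le_mul_of_nonneg_left this hqR.le
  have hqξbound : (q:ℝ) * ξ ≤ (q:ℝ) * (ξ + 1) :=
    mul_le_mul_of_nonneg_left (by linarith) hqR.le
  -- main estimate
  have hmain : |((q:ℝ) * ξ) ^ m - (p:ℝ) ^ m| ≤
      (m * (ξ + 1) ^ (m-1)) * (q:ℝ) ^ m / (Q:ℝ) ^ n := by
    calc |((q:ℝ) * ξ) ^ m - (p:ℝ) ^ m|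
        ≤ m * ((q:ℝ) * (ξ + 1)) ^ (m - 1) * |(q:ℝ) * ξ - (p:ℝ)| :=
          aux_pow_sub_pow_abs_le m _ _ _ (by positivity) (by positivity) hqξbound hpbound
      _ ≤ m * ((q:ℝ) * (ξ + 1)) ^ (m - 1) * ((q:ℝ) / (Q:ℝ) ^ n) := by
          apply mul_le_mul_of_nonneg_left hdist.le
          positivity
      _ = (m * (ξ + 1) ^ (m-1)) * ((q:ℝ) ^ (m - 1) * (q:ℝ)) / (Q:ℝ) ^ n := by
          rw [mul_pow]; ring
      _ = (m * (ξ + 1) ^ (m-1)) * (q:ℝ) ^ m / (Q:ℝ) ^ n := by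
          rw [← pow_succ, Nat.sub_add_cancel (by omega : 1 ≤ m)]
  -- the exponent bound
  have hQR1 : (1:ℝ) ≤ (Q:ℝ) := by exact_mod_cast (by omega : 1 ≤ Q)
  have hQRpos : (0:ℝ) < (Q:ℝ) := by linarith
  have hkey : (m : ℝ) * (ξ + 1) ^ (m-1) ≤ (Q:ℝ) ^ ((n : ℝ) - m - η) := by
    calc (m : ℝ) * (ξ + 1) ^ (m-1) ≤ 2 ^ K := hK1'
      _ ≤ (Q:ℝ) ^ K := pow_le_pow_left₀ (by norm_num) (by exact_mod_cast hQ2) K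
      _ = (Q:ℝ) ^ ((K : ℝ)) := (Real.rpow_natCast _ _).symm
      _ ≤ (Q:ℝ) ^ ((n : ℝ) - m - η) := by
          apply Real.rpow_le_rpow_of_exponent_le hQR1
          have h1 : η ≤ (⌈η⌉₊ : ℝ) := Nat.le_ceil η
          have h2 : (n : ℝ) = (m : ℝ) + (⌈η⌉₊ : ℝ) + K := by
            rw [hn]; push_cast; ring
          linarith
  have hfinal : (m * (ξ + 1) ^ (m-1)) * (q:ℝ) ^ m / (Q:ℝ) ^ n ≤ (Q:ℝ) ^ (-η) := by
    have hqm : (q:ℝ) ^ m ≤ (Q:ℝ) ^ m := pow_le_pow_left₀ hqR.le hqQR m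
    calc (m * (ξ + 1) ^ (m-1)) * (q:ℝ) ^ m / (Q:ℝ) ^ n
        ≤ ((Q:ℝ) ^ ((n : ℝ) - m - η)) * (Q:ℝ) ^ m / (Q:ℝ) ^ n := by
          apply div_le_div_of_nonneg_right _ (by positivity)
          · exact mul_le_mul hkey hqm (by positivity) (by positivity)
      _ = (Q:ℝ) ^ (-η) := by
          rw [← Real.rpow_natCast (Q:ℝ) m, ← Real.rpow_natCast (Q:ℝ) n,
            ← Real.rpow_add hQRpos, ← Real.rpow_sub hQRpos]
          congr 1
          ring
  have hbase : (Q:ℝ) ^ (-η) ≤ (q:ℝ) ^ (-η) :=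
    Real.rpow_le_rpow_of_nonpos hqR hqQR (by linarith)
  exact (hmain.trans hfinal).trans hbase
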